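/- arXiv:2008.03445 — 2 statements merged into one kernel-verified Lean document; each statement's English description precedes it below -/
import Mathlib

section
/- Let h : ℝ² × ℝ² → ℝ satisfy the triangle inequality, let u : ℝ² → ℝ, and let γ₁, γ₂ : ℝ → ℝ² be curves calibrated by u (i.e. h(γ_i(t₁), γ_i(t₂)) = u(γ_i(t₂)) - u(γ_i(t₁)) for all t₁ ≤ t₂). Define d_u(A,B) = inf_{x∈A, y∈B} (h(x,y) - (u(y)-u(x))). Then d_u(γ₁,γ₂) = lim_{t→+∞, s→-∞} (h(γ₁(s), γ₂(t)) - (u(γ₂(t)) - u(γ₁(s)))). -/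
open Filter

/-- The barrier `d_u(A,B) = inf_{x∈A,y∈B} (h(x,y) - (u(y) - u(x)))`. -/
noncomputable def du (h : EuclideanSpace ℝ (Fin 2) → EuclideanSpace ℝ (Fin 2) → ℝ)
    (u : EuclideanSpace ℝ (Fin 2) → ℝ)
    (A B : Set (EuclideanSpace ℝ (Fin 2))) : ℝ :=
  sInf ((fun xy : EuclideanSpace ℝ (Fin 2) × EuclideanSpace ℝ (Fin 2) =>
    h xy.1 xy.2 - (u xy.2 - u xy.1)) '' (A ×ˢ B))

/-- The barrier between two calibrated curves is the limit of
`h(γ₁(s), γ₂(t)) - (u(γ₂(t)) - u(γ₁(s)))` as `s → -∞`, `t → +∞`. -/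
theorem stmt_5 (h : EuclideanSpace ℝ (Fin 2) → EuclideanSpace ℝ (Fin 2) → ℝ)
    (htri : ∀ x y z, h x z ≤ h x y + h y z)
    (u : EuclideanSpace ℝ (Fin 2) → ℝ)
    (hlow : ∀ x y, h x y ≥ u y - u x)
    (γ₁ γ₂ : ℝ → EuclideanSpace ℝ (Fin 2))
    (hcalib₁ : ∀ t₁ t₂, t₁ ≤ t₂ → h (γ₁ t₁) (γ₁ t₂) = u (γ₁ t₂) - u (γ₁ t₁))
    (hcalib₂ : ∀ t₁ t₂, t₁ ≤ t₂ → h (γ₂ t₁) (γ₂ t₂) = u (γ₂ t₂) - u (γ₂ t₁)) :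
    Tendsto (fun st : ℝ × ℝ => h (γ₁ st.1) (γ₂ st.2) - (u (γ₂ st.2) - u (γ₁ st.1)))
      (atBot ×ˢ atTop) (nhds (du h u (Set.range γ₁) (Set.range γ₂))) := by
  set G : ℝ × ℝ → ℝ :=
    fun st => h (γ₁ st.1) (γ₂ st.2) - (u (γ₂ st.2) - u (γ₁ st.1)) with hG
  have himg : (fun xy : EuclideanSpace ℝ (Fin 2) × EuclideanSpace ℝ (Fin 2) =>
      h xy.1 xy.2 - (u xy.2 - u xy.1)) '' ((Set.range γ₁) ×ˢ (Set.range γ₂))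
      = Set.range G := by
    ext r
    constructor
    · rintro ⟨⟨x, y⟩, ⟨⟨s, rfl⟩, ⟨t, rfl⟩⟩, rfl⟩
      exact ⟨(s, t), rfl⟩
    · rintro ⟨⟨s, t⟩, rfl⟩
      exact ⟨(γ₁ s, γ₂ t), ⟨⟨s, rfl⟩, ⟨t, rfl⟩⟩, rfl⟩
  have hmono : ∀ s s' t t', s ≤ s' → t' ≤ t → G (s, t) ≤ G (s', t') := by
    intro s s' t t' hs ht
    have h1 : h (γ₁ s) (γ₂ t) ≤ h (γ₁ s) (γ₁ s') + h (γ₁ s') (γ₂ t') + h (γ₂ t') (γ₂ t) := by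
      calc h (γ₁ s) (γ₂ t) ≤ h (γ₁ s) (γ₂ t') + h (γ₂ t') (γ₂ t) := htri _ _ _
        _ ≤ h (γ₁ s) (γ₁ s') + h (γ₁ s') (γ₂ t') + h (γ₂ t') (γ₂ t) := by
            linarith [htri (γ₁ s) (γ₁ s') (γ₂ t')]
    rw [hcalib₁ s s' hs, hcalib₂ t' t ht] at h1
    simp only [hG]
    linarith
  have hbdd : BddBelow (Set.range G) := by
    refine ⟨0, ?_⟩
    rintro r ⟨⟨s, t⟩, rfl⟩
    have := hlow (γ₁ s) (γ₂ t)
    simp only [hG]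
    linarith
  have hne : (Set.range G).Nonempty := ⟨G (0, 0), ⟨(0, 0), rfl⟩⟩
  rw [du, himg]
  rw [tendsto_order]
  constructor
  · intro a ha
    filter_upwards with st
    exact lt_of_lt_of_le ha (csInf_le hbdd ⟨st, rfl⟩)
  · intro b hb
    obtain ⟨r, ⟨⟨s₀, t₀⟩, rfl⟩, hr⟩ := exists_lt_of_csInf_lt hne hb
    filter_upwards [(eventually_le_atBot s₀).prod_inl atTop,
      (eventually_ge_atTop t₀).prod_inr atBot] with st h1 h2
    exact lt_of_le_of_lt (hmono st.1 s₀ st.2 t₀ h1 h2) hr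
end

section
/- Let F : ℝ² → ℝ be convex and suppose F is not affine on any line segment contained in any open subset of a ball B ⊆ ℝ² (i.e. F is strictly convex on B). Then the set W = ⋃_{p ∈ B} ∂F(p) has nonempty interior in ℝ². -/
open Set Metric

local notation "E2" => EuclideanSpace ℝ (Fin 2)

/-- Existence of a subgradient of a continuous convex function at any point. -/
lemma exists_subgrad (F : E2 → ℝ) (hconv : ConvexOn ℝ Set.univ F)
    (hcont : Continuous F) (z : E2) :
    ∃ q : E2, ∀ p, F z + (inner ℝ q (p - z) : ℝ) ≤ F p := by
  set s : Set (E2 × ℝ) := {x | F x.1 < x.2} with hs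
  have hsconv : Convex ℝ s := by
    rintro x hx y hy a b ha hb hab
    have h1 : F (a • x.1 + b • y.1) ≤ a * F x.1 + b * F y.1 :=
      hconv.2 (mem_univ _) (mem_univ _) ha hb hab
    have hx' : F x.1 < x.2 := hx
    have hy' : F y.1 < y.2 := hy
    show F (a • x.1 + b • y.1) < a * x.2 + b * y.2
    have h2 : a * F x.1 + b * F y.1 < a * x.2 + b * y.2 := by
      rcases ha.eq_or_lt with h | h
      · have hb1 : b = 1 := by linarith
        rw [← h, hb1]
        simpa using hy'
      · have h3 := mul_lt_mul_of_pos_left hx' h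
        have h4 := mul_le_mul_of_nonneg_left hy'.le hb
        linarith
    linarith
  have hsopen : IsOpen s := by
    have : s = (fun x : E2 × ℝ => x.2 - F x.1) ⁻¹' Set.Ioi 0 := by
      ext x; simp [hs, sub_pos]
    rw [this]
    exact IsOpen.preimage (by fun_prop) isOpen_Ioi
  have hzs : (z, F z) ∉ s := by simp [hs]
  obtain ⟨f, hf⟩ := geometric_hahn_banach_open_point hsconv hsopen hzs
  set c : ℝ := f (0, 1) with hc
  have hdecomp : ∀ (p : E2) (t : ℝ), f (p, t) = f (p, 0) + t * c := by
    intro p t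
    have : (p, t) = (p, 0) + t • ((0 : E2), (1 : ℝ)) := by
      simp [Prod.ext_iff]
    rw [this, map_add, map_smul]; simp [hc]
  have hclt : c < 0 := by
    have := hf (z, F z + 1) (by simp [hs])
    rw [hdecomp z (F z + 1), hdecomp z (F z)] at this
    linarith
  have key : ∀ p, f (p, 0) + F p * c ≤ f (z, 0) + F z * c := by
    intro p
    by_contra h
    push_neg at h
    set ε : ℝ := (f (p, 0) + F p * c - (f (z, 0) + F z * c)) / (-c) with hε
    have hεpos : 0 < ε := div_pos (by linarith) (by linarith)
    have := hf (p, F p + ε) (by simp [hs, hεpos])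
    rw [hdecomp p (F p + ε), hdecomp z (F z)] at this
    have hεc : ε * (-c) = f (p, 0) + F p * c - (f (z, 0) + F z * c) := by
      rw [hε, div_mul_cancel₀]; linarith
    nlinarith
  set g : E2 →L[ℝ] ℝ := f.comp (ContinuousLinearMap.inl ℝ E2 ℝ) with hg
  refine ⟨(InnerProductSpace.toDual ℝ E2).symm ((-c)⁻¹ • g), fun p => ?_⟩
  have hinner : (inner ℝ ((InnerProductSpace.toDual ℝ E2).symm ((-c)⁻¹ • g)) (p - z) : ℝ)
      = (-c)⁻¹ * (f (p, 0) - f (z, 0)) := by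
    rw [InnerProductSpace.toDual_symm_apply]
    have : g (p - z) = f (p, 0) - f (z, 0) := by
      rw [hg]
      have : ((p - z : E2), (0:ℝ)) = (p, (0:ℝ)) - (z, (0:ℝ)) := by simp [Prod.ext_iff]
      simp only [ContinuousLinearMap.comp_apply, ContinuousLinearMap.inl_apply, this, map_sub]
    simp [this]
  rw [hinner]
  have h2 : (-c)⁻¹ * (f (p, 0) - f (z, 0)) ≤ F p - F z := by
    rw [inv_mul_le_iff₀ (by linarith : (0:ℝ) < -c)]
    have := key p
    nlinarith
  linarith

/-- If a convex function is strictly convex on an open ball in ℝ², then the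
union of its subdifferentials over the ball has nonempty interior. -/
theorem stmt_14 (F : EuclideanSpace ℝ (Fin 2) → ℝ)
    (hconv : ConvexOn ℝ Set.univ F)
    (z : EuclideanSpace ℝ (Fin 2)) (R : ℝ) (hR : 0 < R)
    (hstrict : StrictConvexOn ℝ (Metric.ball z R) F) :
    (interior (⋃ p ∈ Metric.ball z R,
      {q : EuclideanSpace ℝ (Fin 2) |
        ∀ p', F p' ≥ F p + (inner ℝ q (p' - p) : ℝ)})).Nonempty := by
  have hcont : Continuous F := by
    rw [← continuousOn_univ]
    exact hconv.continuousOn isOpen_univ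
  obtain ⟨q₀, hq₀⟩ := exists_subgrad F hconv hcont z
  set r : ℝ := R / 2 with hr
  have hrpos : 0 < r := by positivity
  -- the auxiliary function H
  set H : E2 → ℝ := fun p => F p - F z - (inner ℝ q₀ (p - z) : ℝ) with hH
  have hHcont : Continuous H := by
    apply Continuous.sub (by fun_prop)
    exact (continuous_const.inner (continuous_id.sub continuous_const))
  have hHnonneg : ∀ p, 0 ≤ H p := fun p => by
    have := hq₀ p
    show (0:ℝ) ≤ F p - F z - (inner ℝ q₀ (p - z) : ℝ)
    linarith
  -- minimum of H on the sphere is positive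
  have hsSphere : (sphere z r).Nonempty := NormedSpace.sphere_nonempty.2 hrpos.le
  obtain ⟨p₀, hp₀S, hp₀min⟩ := (isCompact_sphere z r).exists_isMinOn hsSphere
    hHcont.continuousOn
  set δ : ℝ := H p₀ with hδ
  have hδpos : 0 < δ := by
    rcases (hHnonneg p₀).lt_or_eq with h | h
    · exact h
    -- if H p₀ = 0, F is affine on [z, p₀], contradicting strict convexity
    exfalso
    have hzp₀ : z ≠ p₀ := by
      intro h'
      have : dist p₀ z = r := hp₀S
      rw [← h'] at this
      simp at this
      linarith
    have hzB : z ∈ ball z R := mem_ball_self hR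
    have hp₀B : p₀ ∈ ball z R := by
      have : dist p₀ z = r := hp₀S
      rw [mem_ball, this, hr]; linarith
    have hmid := hstrict.2 hzB hp₀B hzp₀ (by norm_num : (0:ℝ) < 1/2)
      (by norm_num : (0:ℝ) < 1/2) (by norm_num)
    have hsub := hq₀ ((1/2 : ℝ) • z + (1/2 : ℝ) • p₀)
    have hinner2 : (inner ℝ q₀ ((1/2 : ℝ) • z + (1/2 : ℝ) • p₀ - z) : ℝ)
        = (1/2 : ℝ) * (inner ℝ q₀ (p₀ - z) : ℝ) := by
      have : (1/2 : ℝ) • z + (1/2 : ℝ) • p₀ - z = (1/2 : ℝ) • (p₀ - z) := by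
        module
      rw [this, real_inner_smul_right]
    have hFp₀ : F p₀ = F z + (inner ℝ q₀ (p₀ - z) : ℝ) := by
      have h0 : F p₀ - F z - (inner ℝ q₀ (p₀ - z) : ℝ) = 0 := h.symm
      linarith
    rw [hinner2] at hsub
    simp only [smul_eq_mul] at hmid
    linarith
  -- the open ball of subgradients
  have hsub : ball q₀ (δ / (2 * r)) ⊆ ⋃ p ∈ Metric.ball z R,
      {q : E2 | ∀ p', F p' ≥ F p + (inner ℝ q (p' - p) : ℝ)} := by
    intro q hq
    rw [mem_ball, dist_eq_norm] at hq
    set G : E2 → ℝ := fun p => F p - (inner ℝ q p : ℝ) with hG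
    have hGcont : Continuous G :=
      Continuous.sub (by fun_prop) (continuous_const.inner continuous_id)
    have hGconv : ConvexOn ℝ Set.univ G := by
      constructor
      · exact convex_univ
      intro x _ y _ a b ha hb hab
      have := hconv.2 (mem_univ x) (mem_univ y) ha hb hab
      simp only [smul_eq_mul] at this
      simp only [hG, inner_add_right, real_inner_smul_right, smul_eq_mul]
      linarith
    -- min of G on closed ball
    obtain ⟨p', hp'cb, hp'min⟩ := (isCompact_closedBall z r).exists_isMinOn
      (nonempty_closedBall.2 hrpos.le) hGcont.continuousOn
    -- p' is not on the sphere
    have hGz : G p' ≤ G z := hp'min (mem_closedBall_self hrpos.le)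
    have hp'int : p' ∈ ball z r := by
      rcases lt_or_eq_of_le (mem_closedBall.1 hp'cb) with h | h
      · exact mem_ball.2 h
      exfalso
      -- p' on sphere: G p' > G z
      have hp'S : p' ∈ sphere z r := mem_sphere.2 h
      have h1 : δ ≤ H p' := hp₀min hp'S
      have h2 : |(inner ℝ (q - q₀) (p' - z) : ℝ)| ≤ ‖q - q₀‖ * ‖p' - z‖ :=
        abs_real_inner_le_norm _ _
      have h3 : ‖p' - z‖ = r := by
        rw [← dist_eq_norm]; exact mem_sphere.1 hp'S
      have h4 : ‖q - q₀‖ * ‖p' - z‖ < δ / 2 := by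
        rw [h3]
        calc ‖q - q₀‖ * r < (δ / (2 * r)) * r := by
              apply mul_lt_mul_of_pos_right hq hrpos
          _ = δ / 2 := by field_simp
      have h5 : G p' - G z = H p' - (inner ℝ (q - q₀) (p' - z) : ℝ) := by
        simp only [hG, hH, inner_sub_left, inner_sub_right]
        ring
      obtain ⟨hl, hr2⟩ := abs_le.1 h2
      have h6 : H p' - (inner ℝ (q - q₀) (p' - z) : ℝ) ≤ 0 := by linarith
      have h7 : (inner ℝ (q - q₀) (p' - z) : ℝ) < δ / 2 := by linarith
      have hx2 : H p' < δ / 2 := by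
        clear_value H δ G r
        simp only [PiLp.inner_apply, RCLike.inner_apply, conj_trivial,
          Fin.sum_univ_two] at h6 h7
        linarith [h6, h7]
      have h8 : δ < δ / 2 := lt_of_le_of_lt h1 hx2
      linarith
    -- p' is a local min of G, hence global
    have hloc : IsLocalMin G p' := by
      apply Filter.eventually_of_mem (ball_mem_nhds p' (sub_pos.2 (mem_ball.1 hp'int)))
      intro x hx
      apply hp'min
      rw [mem_ball] at hx
      rw [mem_closedBall]
      calc dist x z ≤ dist x p' + dist p' z := dist_triangle _ _ _
        _ ≤ r := by linarith [mem_ball.1 hp'int]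
    have hglob := IsMinOn.of_isLocalMin_of_convex_univ hloc hGconv
    apply Set.mem_biUnion (show p' ∈ ball z R by
      rw [mem_ball] at hp'int ⊢; rw [hr] at hp'int; linarith)
    intro p''
    have := hglob p''
    simp only [hG] at this
    have hinner3 : (inner ℝ q (p'' - p') : ℝ) = (inner ℝ q p'' : ℝ) - (inner ℝ q p' : ℝ) := by
      rw [inner_sub_right]
    rw [ge_iff_le, hinner3]
    linarith
  have : q₀ ∈ interior (⋃ p ∈ Metric.ball z R,
      {q : E2 | ∀ p', F p' ≥ F p + (inner ℝ q (p' - p) : ℝ)}) := by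
    apply interior_maximal hsub isOpen_ball
    exact mem_ball_self (by positivity)
  exact ⟨q₀, this⟩
end
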